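/- For any prime p, the number of orbits of Aut(G) acting on G = Z_{p^{λ_1}} × ⋯ × Z_{p^{λ_n}} equals ∏_{i=1}^{n} (λ_i − λ_{i−1} + 1), where λ_0 = 0. If moreover p ≠ 2, then the number of characteristic subgroups of G also equals ∏_{i=1}^{n} (λ_i − λ_{i−1} + 1). -/

import Mathlib

namespace MBB

/-- The subgroup `p^k · ZMod m`. -/
def mulSub (p m k : ℕ) : AddSubgroup (ZMod m) where
  carrier := {x | ∃ y, x = (p : ZMod m) ^ k * y}
  zero_mem' := ⟨0, (mul_zero _).symm⟩
  add_mem' := by rintro a b ⟨y, rfl⟩ ⟨z, rfl⟩; exact ⟨y + z, (mul_add _ _ _).symm⟩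
  neg_mem' := by rintro a ⟨y, rfl⟩; exact ⟨-y, (mul_neg _ _).symm⟩

lemma mem_mulSub {p m k : ℕ} {x : ZMod m} :
    x ∈ mulSub p m k ↔ ∃ y, x = (p : ZMod m) ^ k * y := Iff.rfl

lemma mulSub_anti {p m s t : ℕ} (h : t ≤ s) : mulSub p m s ≤ mulSub p m t := by
  rintro x ⟨y, rfl⟩
  exact ⟨(p : ZMod m) ^ (s - t) * y, by rw [← mul_assoc, ← pow_add]; congr 2; omega⟩

lemma pow_mem_mulSub_iff {p : ℕ} (hp : p.Prime) {lam a b : ℕ} :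
    ((p : ZMod (p ^ lam)) ^ a ∈ mulSub p (p ^ lam) b) ↔ min b lam ≤ a := by
  haveI : NeZero (p ^ lam) := ⟨pow_ne_zero _ hp.pos.ne'⟩
  constructor
  · rintro ⟨y, hy⟩
    by_contra hlt
    push_neg at hlt
    have hab : a < b := by omega
    have hal : a < lam := by omega
    have hy' : ((p ^ a : ℕ) : ZMod (p ^ lam)) = ((p ^ b * y.val : ℕ) : ZMod (p ^ lam)) := by
      push_cast
      rw [ZMod.natCast_zmod_val]
      exact hy
    have hmod : (p ^ a) ≡ (p ^ b * y.val) [MOD p ^ lam] :=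
      (ZMod.natCast_eq_natCast_iff _ _ _).1 hy'
    have hmod2 : (p ^ a) ≡ (p ^ b * y.val) [MOD p ^ (a + 1)] :=
      hmod.of_dvd (pow_dvd_pow p (by omega))
    have h0 : (p ^ b * y.val) ≡ 0 [MOD p ^ (a + 1)] :=
      (Nat.modEq_zero_iff_dvd).2 (dvd_mul_of_dvd_left (pow_dvd_pow p (by omega)) _)
    have : p ^ (a + 1) ∣ p ^ a := (Nat.modEq_zero_iff_dvd).1 (hmod2.trans h0)
    have := (Nat.pow_dvd_pow_iff_le_right hp.one_lt).1 this
    omega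
  · intro h
    rcases le_or_gt b a with hba | hba
    · exact ⟨(p : ZMod (p ^ lam)) ^ (a - b), by rw [← pow_add]; congr 1; omega⟩
    · have hla : lam ≤ a := by omega
      refine ⟨0, ?_⟩
      rw [mul_zero]
      have h1 : ((p : ZMod (p ^ lam))) ^ a = ((p ^ a : ℕ) : ZMod (p ^ lam)) := by push_cast; ring
      rw [h1, ZMod.natCast_eq_zero_iff]
      exact pow_dvd_pow p hla

lemma exists_unit_pow {p : ℕ} (hp : p.Prime) {lam : ℕ} (x : ZMod (p ^ lam)) :
    ∃ (u : (ZMod (p ^ lam))ˣ) (v : ℕ), v ≤ lam ∧ x = (p : ZMod (p ^ lam)) ^ v * u := by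
  haveI : NeZero (p ^ lam) := ⟨pow_ne_zero _ hp.pos.ne'⟩
  by_cases hx : x = 0
  · refine ⟨1, lam, le_rfl, ?_⟩
    rw [hx, Units.val_one, mul_one]
    have h1 : ((p : ZMod (p ^ lam))) ^ lam = ((p ^ lam : ℕ) : ZMod (p ^ lam)) := by push_cast; ring
    rw [h1, ZMod.natCast_self]
  · set k := x.val with hkdef
    have hk : k ≠ 0 := fun h => hx (by rw [← ZMod.natCast_zmod_val x, ← hkdef, h, Nat.cast_zero])
    set v := k.factorization p with hv
    set m := k / p ^ v with hm
    have hmd : ¬ p ∣ m := Nat.not_dvd_ordCompl hp hk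
    have hkm : p ^ v * m = k := Nat.ordProj_mul_ordCompl_eq_self k p
    have hcop : Nat.Coprime m (p ^ lam) :=
      Nat.Coprime.pow_right _ (((Nat.Prime.coprime_iff_not_dvd hp).2 hmd).symm)
    refine ⟨ZMod.unitOfCoprime m hcop, v, ?_, ?_⟩
    · have h1 : p ^ v ≤ k := Nat.ordProj_le p hk
      have h2 : k < p ^ lam := ZMod.val_lt x
      have := (Nat.pow_lt_pow_iff_right hp.one_lt).1 (lt_of_le_of_lt h1 h2)
      omega
    · rw [ZMod.coe_unitOfCoprime]
      have : x = ((k : ℕ) : ZMod (p ^ lam)) := (ZMod.natCast_zmod_val x).symm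
      rw [this, ← hkm]
      push_cast
      ring

lemma mem_of_pow_mul_eq_zero {p : ℕ} (hp : p.Prime) {lam a : ℕ} {z : ZMod (p ^ lam)}
    (h : (p : ZMod (p ^ lam)) ^ a * z = 0) : z ∈ mulSub p (p ^ lam) (lam - a) := by
  rcases le_or_gt lam a with hla | hal
  · exact ⟨z, by rw [Nat.sub_eq_zero_of_le hla, pow_zero, one_mul]⟩
  · haveI : NeZero (p ^ lam) := ⟨pow_ne_zero _ hp.pos.ne'⟩
    have hz : z = ((z.val : ℕ) : ZMod (p ^ lam)) := (ZMod.natCast_zmod_val z).symm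
    have h0 : ((p ^ a * z.val : ℕ) : ZMod (p ^ lam)) = 0 := by
      push_cast
      rw [← hz]
      exact h
    rw [ZMod.natCast_eq_zero_iff] at h0
    have h2 : p ^ a * p ^ (lam - a) ∣ p ^ a * z.val := by
      rw [← pow_add]
      have : a + (lam - a) = lam := by omega
      rw [this]
      exact h0
    have hdvd : p ^ (lam - a) ∣ z.val :=
      (Nat.mul_dvd_mul_iff_left (pow_pos hp.pos a)).1 h2
    obtain ⟨t, ht⟩ := hdvd
    exact ⟨(t : ZMod (p ^ lam)), by rw [hz, ht]; push_cast; ring⟩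

lemma addHom_image_mem {p : ℕ} (hp : p.Prime) {a b : ℕ}
    (f : ZMod (p ^ a) →+ ZMod (p ^ b)) {s : ℕ} {x : ZMod (p ^ a)}
    (hx : x ∈ mulSub p (p ^ a) s) : f x ∈ mulSub p (p ^ b) (s + (b - a)) := by
  obtain ⟨y, rfl⟩ := hx
  have key : (p : ZMod (p ^ b)) ^ a * f y = 0 := by
    have h1 : (p ^ a : ℕ) • y = 0 := by
      rw [nsmul_eq_mul]
      push_cast
      rw [show ((p : ZMod (p ^ a)) ^ a) = ((p ^ a : ℕ) : ZMod (p ^ a)) by push_cast; ring,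
        ZMod.natCast_self, zero_mul]
    calc (p : ZMod (p ^ b)) ^ a * f y = (p ^ a : ℕ) • f y := by rw [nsmul_eq_mul]; push_cast; ring
    _ = f ((p ^ a : ℕ) • y) := (AddMonoidHom.map_nsmul f (p ^ a) y).symm
    _ = 0 := by rw [h1, map_zero]
  obtain ⟨w, hw⟩ := mem_of_pow_mul_eq_zero hp key
  refine ⟨w, ?_⟩
  have h3 : (p : ZMod (p ^ a)) ^ s * y = (p ^ s : ℕ) • y := by rw [nsmul_eq_mul]; push_cast; ring
  rw [h3, AddMonoidHom.map_nsmul, nsmul_eq_mul]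
  push_cast
  rw [hw, ← mul_assoc, ← pow_add]


section Main

variable (p n : ℕ) (lam : ℕ → ℕ)

/-- The group `Z_{p^{λ₁}} × ⋯ × Z_{p^{λₙ}}`. -/
abbrev G := ∀ i : Fin n, ZMod (p ^ lam ((i : ℕ) + 1))

variable {p n lam}

/-- Diagonal automorphism given by a family of units. -/
def diagAut (u : ∀ i : Fin n, (ZMod (p ^ lam ((i : ℕ) + 1)))ˣ) : AddAut (G p n lam) where
  toFun x := fun i => (u i : ZMod _) * x i
  invFun x := fun i => (((u i)⁻¹ : (ZMod _)ˣ) : ZMod _) * x i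
  left_inv x := by funext i; show (((u i)⁻¹ : (ZMod _)ˣ) : ZMod _) * ((u i : ZMod _) * x i) = x i; rw [← mul_assoc, Units.inv_mul, one_mul]
  right_inv x := by funext i; show (u i : ZMod _) * ((((u i)⁻¹ : (ZMod _)ˣ) : ZMod _) * x i) = x i; rw [← mul_assoc, Units.mul_inv, one_mul]
  map_add' x y := by funext i; exact mul_add _ _ _

lemma diagAut_apply (u : ∀ i : Fin n, (ZMod (p ^ lam ((i : ℕ) + 1)))ˣ) (x : G p n lam)
    (i : Fin n) : diagAut u x i = (u i : ZMod _) * x i := rfl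

/-- Transvection: add `f` of the `j`-th coordinate to the `i`-th coordinate. -/
def transvec (i j : Fin n) (hij : j ≠ i)
    (f : ZMod (p ^ lam ((j : ℕ) + 1)) →+ ZMod (p ^ lam ((i : ℕ) + 1))) :
    AddAut (G p n lam) where
  toFun x := Function.update x i (x i + f (x j))
  invFun x := Function.update x i (x i - f (x j))
  left_inv x := by
    funext k
    rcases eq_or_ne k i with rfl | hk
    · simp [Function.update_of_ne hij]
    · simp [Function.update_of_ne hk]
  right_inv x := by
    funext k
    rcases eq_or_ne k i with rfl | hk
    · simp [Function.update_of_ne hij]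
    · simp [Function.update_of_ne hk]
  map_add' x y := by
    funext k
    rcases eq_or_ne k i with rfl | hk
    · simp only [Function.update_self, Pi.add_apply, map_add]
      abel
    · simp [Function.update_of_ne hk]

lemma transvec_apply (i j : Fin n) (hij : j ≠ i)
    (f : ZMod (p ^ lam ((j : ℕ) + 1)) →+ ZMod (p ^ lam ((i : ℕ) + 1))) (x : G p n lam) :
    transvec i j hij f x = Function.update x i (x i + f (x j)) := rfl

/-- Same-orbit relation. -/
def R (x y : G p n lam) : Prop := ∃ φ : AddAut (G p n lam), φ x = y

lemma R.refl (x : G p n lam) : R x x := ⟨0, rfl⟩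

lemma R.symm {x y : G p n lam} (h : R x y) : R y x := by
  obtain ⟨φ, rfl⟩ := h
  exact ⟨-φ, φ.symm_apply_apply x⟩

lemma R.trans {x y z : G p n lam} (h1 : R x y) (h2 : R y z) : R x z := by
  obtain ⟨φ, rfl⟩ := h1
  obtain ⟨ψ, rfl⟩ := h2
  exact ⟨ψ + φ, rfl⟩

lemma R_update_unit (i : Fin n) (u : (ZMod (p ^ lam ((i : ℕ) + 1)))ˣ) (x : G p n lam) :
    R x (Function.update x i (((u⁻¹ : (ZMod _)ˣ) : ZMod _) * x i)) := by
  refine ⟨diagAut (Function.update (fun j => 1) i u⁻¹), ?_⟩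
  funext j
  rcases eq_or_ne j i with rfl | hj
  · rw [diagAut_apply, Function.update_self, Function.update_self]
  · rw [diagAut_apply, Function.update_of_ne hj, Function.update_of_ne hj, Units.val_one, one_mul]

end Main

section Main2
variable {p n : ℕ} {lam : ℕ → ℕ}

/-- `Φ x m` : the least `l` with `p^l • x ∈ p^m • G`. -/
noncomputable def Phi (x : G p n lam) (m : ℕ) : ℕ :=
  sInf {l | ∃ y : G p n lam, (p ^ l : ℕ) • x = (p ^ m : ℕ) • y}

lemma exists_smul_iff {x : G p n lam} {l m : ℕ} :
    (∃ y : G p n lam, (p ^ l : ℕ) • x = (p ^ m : ℕ) • y) ↔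
      ∀ i : Fin n, (p : ZMod (p ^ lam ((i : ℕ) + 1))) ^ l * x i ∈
        mulSub p (p ^ lam ((i : ℕ) + 1)) m := by
  simp only [mem_mulSub]
  constructor
  · rintro ⟨y, h⟩ i
    have := congrFun h i
    refine ⟨y i, ?_⟩
    have h1 : (p ^ l : ℕ) • x i = (p : ZMod (p ^ lam ((i:ℕ)+1))) ^ l * x i := by
      rw [nsmul_eq_mul]; push_cast; ring
    have h2 : (p ^ m : ℕ) • y i = (p : ZMod (p ^ lam ((i:ℕ)+1))) ^ m * y i := by
      rw [nsmul_eq_mul]; push_cast; ring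
    rw [← h1, ← h2]
    exact this
  · intro h
    choose y hy using h
    refine ⟨y, ?_⟩
    funext i
    have h1 : (p ^ l : ℕ) • x i = (p : ZMod (p ^ lam ((i:ℕ)+1))) ^ l * x i := by
      rw [nsmul_eq_mul]; push_cast; ring
    have h2 : (p ^ m : ℕ) • y i = (p : ZMod (p ^ lam ((i:ℕ)+1))) ^ m * y i := by
      rw [nsmul_eq_mul]; push_cast; ring
    show (p ^ l : ℕ) • x i = (p ^ m : ℕ) • y i
    rw [h1, h2, hy i]

lemma Phi_aut (φ : AddAut (G p n lam)) (x : G p n lam) (m : ℕ) : Phi (φ x) m = Phi x m := by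
  unfold Phi
  congr 1
  ext l
  constructor
  · rintro ⟨y, hy⟩
    refine ⟨(-φ) y, φ.injective ?_⟩
    calc φ ((p ^ l : ℕ) • x) = (p ^ l : ℕ) • φ x := map_nsmul φ _ x
      _ = (p ^ m : ℕ) • y := hy
      _ = (p ^ m : ℕ) • φ ((-φ) y) := by rw [show φ ((-φ) y) = y from φ.apply_symm_apply y]
      _ = φ ((p ^ m : ℕ) • (-φ) y) := (map_nsmul φ _ ((-φ) y)).symm
  · rintro ⟨y, hy⟩
    refine ⟨φ y, ?_⟩
    calc (p ^ l : ℕ) • φ x = φ ((p ^ l : ℕ) • x) := (map_nsmul φ _ x).symm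
      _ = φ ((p ^ m : ℕ) • y) := by rw [hy]
      _ = (p ^ m : ℕ) • φ y := map_nsmul φ _ y


variable (p n lam) in
/-- The standard element with valuations `c`. -/
noncomputable def ee (c : ℕ → ℕ) : G p n lam := fun i => (p : ZMod _) ^ (c ((i : ℕ) + 1))

variable (n lam) in
/-- Regular (valuation) sequences, with the convention `c 0 = 0`. -/
def Reg (c : ℕ → ℕ) : Prop :=
  c 0 = 0 ∧ ∀ k, k < n → c k ≤ c (k + 1) ∧ c (k + 1) + lam k ≤ c k + lam (k + 1)

lemma Reg.mono {c : ℕ → ℕ} (hc : Reg n lam c) :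
    ∀ k l, k ≤ l → l ≤ n → c k ≤ c l := by
  intro k l hkl hln
  induction l with
  | zero => have hk0 : k = 0 := by omega
            subst hk0; exact le_rfl
  | succ m ih =>
    rcases Nat.eq_or_lt_of_le hkl with rfl | hlt
    · exact le_rfl
    · exact le_trans (ih (by omega) (by omega)) (hc.2 m (by omega)).1

lemma Reg.lmono {c : ℕ → ℕ} (hc : Reg n lam c) :
    ∀ k l, k ≤ l → l ≤ n → c l + lam k ≤ c k + lam l := by
  intro k l hkl hln
  induction l with
  | zero => have hk0 : k = 0 := by omega
            subst hk0; exact le_rfl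
  | succ m ih =>
    rcases Nat.eq_or_lt_of_le hkl with rfl | hlt
    · exact le_rfl
    · have h1 := ih (by omega) (by omega)
      have h2 := (hc.2 m (by omega)).2
      omega

lemma Reg.le_lam {c : ℕ → ℕ} (hc : Reg n lam c) (hlam0 : lam 0 = 0) :
    ∀ k, k ≤ n → c k ≤ lam k := by
  intro k hk
  have := hc.lmono 0 k (by omega) hk
  rw [hc.1, hlam0] at this
  omega

lemma Phi_ee (hp : p.Prime)
    (hmono : ∀ i j, 1 ≤ i → i ≤ j → j ≤ n → lam i ≤ lam j)
    {c : ℕ → ℕ} (hc : Reg n lam c) (hcl : ∀ k, k ≤ n → c k ≤ lam k)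
    (k : ℕ) (hk1 : 1 ≤ k) (hkn : k ≤ n) :
    Phi (ee p n lam c) (lam k) = lam k - c k := by
  have hset : {l | ∃ y : G p n lam, (p ^ l : ℕ) • (ee p n lam c) = (p ^ lam k : ℕ) • y} =
      {l | ∀ i : Fin n, min (lam k) (lam ((i : ℕ) + 1)) ≤ l + c ((i : ℕ) + 1)} := by
    ext l
    rw [Set.mem_setOf_eq, Set.mem_setOf_eq, exists_smul_iff]
    constructor
    · intro h i
      have := h i
      rw [show (p : ZMod (p ^ lam ((i:ℕ)+1))) ^ l * (ee p n lam c) i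
          = (p : ZMod (p ^ lam ((i:ℕ)+1))) ^ (l + c ((i:ℕ)+1)) from by
        rw [pow_add]; rfl] at this
      exact (pow_mem_mulSub_iff hp).1 this
    · intro h i
      rw [show (p : ZMod (p ^ lam ((i:ℕ)+1))) ^ l * (ee p n lam c) i
          = (p : ZMod (p ^ lam ((i:ℕ)+1))) ^ (l + c ((i:ℕ)+1)) from by
        rw [pow_add]; rfl]
      exact (pow_mem_mulSub_iff hp).2 (h i)
  unfold Phi
  rw [hset]
  have hmem : (lam k - c k) ∈
      {l | ∀ i : Fin n, min (lam k) (lam ((i : ℕ) + 1)) ≤ l + c ((i : ℕ) + 1)} := by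
    intro i
    set j := (i : ℕ) + 1 with hj
    have hj1 : 1 ≤ j := by omega
    have hjn : j ≤ n := by omega
    rcases le_or_gt j k with hjk | hkj
    · have h1 : lam j ≤ lam k := hmono j k hj1 hjk hkn
      have h2 := hc.lmono j k hjk hkn
      have h3 := hcl k hkn
      omega
    · have h1 : c k ≤ c j := hc.mono k j (by omega) hjn
      have h3 := hcl k hkn
      omega
  apply le_antisymm (Nat.sInf_le hmem)
  have hinf := Nat.sInf_mem (Set.nonempty_of_mem hmem)
  set l0 := sInf {l | ∀ i : Fin n, min (lam k) (lam ((i : ℕ) + 1)) ≤ l + c ((i : ℕ) + 1)}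
  have hk' : k - 1 < n := by omega
  have := hinf ⟨k - 1, hk'⟩
  have hkk : ((⟨k - 1, hk'⟩ : Fin n) : ℕ) + 1 = k := by simp; omega
  rw [hkk] at this
  have h3 := hcl k hkn
  omega

variable (lam) in
/-- The complete orbit invariant. -/
noncomputable def invc (x : G p n lam) (k : ℕ) : ℕ := lam k - Phi x (lam k)

lemma invc_aut (φ : AddAut (G p n lam)) (x : G p n lam) (k : ℕ) :
    invc lam (φ x) k = invc lam x k := by
  unfold invc
  rw [Phi_aut]

lemma invc_ee (hp : p.Prime)
    (hmono : ∀ i j, 1 ≤ i → i ≤ j → j ≤ n → lam i ≤ lam j)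
    {c : ℕ → ℕ} (hc : Reg n lam c) (hcl : ∀ k, k ≤ n → c k ≤ lam k)
    (k : ℕ) (hk1 : 1 ≤ k) (hkn : k ≤ n) :
    invc lam (ee p n lam c) k = c k := by
  unfold invc
  rw [Phi_ee hp hmono hc hcl k hk1 hkn]
  have := hcl k hkn
  omega


lemma unit_cancel (hp : p.Prime) {m : ℕ} {s t : ℕ} (hts : t < s) :
    ∃ u : (ZMod (p ^ m))ˣ,
      (p : ZMod (p ^ m)) ^ t * u = (p : ZMod (p ^ m)) ^ s + (p : ZMod (p ^ m)) ^ t := by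
  set w := p ^ (s - t) + 1 with hw
  have hpw : ¬ p ∣ w := by
    intro hdvd
    have h1 : p ∣ p ^ (s - t) := dvd_pow_self p (by omega)
    have h2 : p ∣ w - p ^ (s - t) := Nat.dvd_sub hdvd h1
    have h3 : w - p ^ (s - t) = 1 := by omega
    rw [h3] at h2
    have := Nat.le_of_dvd one_pos h2
    have := hp.two_le
    omega
  have hcop : Nat.Coprime w (p ^ m) :=
    Nat.Coprime.pow_right _ ((hp.coprime_iff_not_dvd.mpr hpw).symm)
  refine ⟨ZMod.unitOfCoprime w hcop, ?_⟩
  rw [ZMod.coe_unitOfCoprime, hw]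
  push_cast
  rw [mul_add, mul_one, ← pow_add]
  have hts' : t + (s - t) = s := by omega
  rw [hts']


lemma unit_mul_cancel {M : ℕ} (u : (ZMod M)ˣ) (a : ZMod M) :
    ((u⁻¹ : (ZMod M)ˣ) : ZMod M) * (a * u) = a := by
  rw [mul_comm a (u : ZMod M), ← mul_assoc, Units.inv_mul, one_mul]

lemma move_diag (hp : p.Prime) (x : G p n lam) :
    ∃ v : ℕ → ℕ, v 0 = 0 ∧ (∀ k, 1 ≤ k → k ≤ n → v k ≤ lam k) ∧ R x (ee p n lam v) := by
  choose u v hv hx using fun i : Fin n => exists_unit_pow hp (x i)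
  set vv : ℕ → ℕ := fun k => if h : 1 ≤ k ∧ k ≤ n then v ⟨k - 1, by omega⟩ else 0 with hvv
  have hvvi : ∀ i : Fin n, vv ((i : ℕ) + 1) = v i := by
    intro i
    have hcond : 1 ≤ (i : ℕ) + 1 ∧ (i : ℕ) + 1 ≤ n := ⟨by omega, by omega⟩
    have h1 : vv ((i : ℕ) + 1) = v ⟨(i : ℕ) + 1 - 1, by omega⟩ := dif_pos hcond
    have h2 : (⟨(i : ℕ) + 1 - 1, by omega⟩ : Fin n) = i := Fin.ext (by simp)
    rw [h2] at h1
    exact h1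
  refine ⟨vv, by simp [hvv], ?_, ?_⟩
  · intro k hk1 hkn
    have hvvk : vv k = v ⟨k - 1, by omega⟩ := dif_pos ⟨hk1, hkn⟩
    rw [hvvk]
    have h2 := hv ⟨k - 1, by omega⟩
    simp only [Fin.val_mk] at h2
    rw [show k - 1 + 1 = k by omega] at h2
    exact h2
  · refine ⟨diagAut (fun i => (u i)⁻¹), ?_⟩
    funext i
    rw [diagAut_apply, hx i]
    show (((u i)⁻¹ : (ZMod (p ^ lam ((i : ℕ) + 1)))ˣ) : ZMod (p ^ lam ((i : ℕ) + 1)))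
        * ((p : ZMod (p ^ lam ((i : ℕ) + 1))) ^ v i * (u i : ZMod (p ^ lam ((i : ℕ) + 1))))
        = (p : ZMod (p ^ lam ((i : ℕ) + 1))) ^ vv ((i : ℕ) + 1)
    rw [hvvi i, unit_mul_cancel]

lemma move_a (hp : p.Prime)
    (hmono : ∀ i j, 1 ≤ i → i ≤ j → j ≤ n → lam i ≤ lam j) (v : ℕ → ℕ) (k : ℕ)
    (hk1 : 1 ≤ k) (hkn : k < n) (hlt : v (k + 1) < v k) :
    R (ee p n lam v) (ee p n lam (Function.update v k (v (k + 1)))) := by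
  set i : Fin n := ⟨k - 1, by omega⟩ with hidef
  set j : Fin n := ⟨k, hkn⟩ with hjdef
  have hi1 : (i : ℕ) + 1 = k := by simp [hidef]; omega
  have hj1 : (j : ℕ) + 1 = k + 1 := by simp [hjdef]
  have hij : j ≠ i := by
    intro h
    have := congrArg Fin.val h
    simp [hidef, hjdef] at this
    omega
  have hdvd : (p : ℕ) ^ lam ((i : ℕ) + 1) ∣ p ^ lam ((j : ℕ) + 1) := by
    rw [hi1, hj1]
    exact pow_dvd_pow p (hmono k (k + 1) hk1 (by omega) (by omega))
  set f := (ZMod.castHom hdvd (ZMod (p ^ lam ((i : ℕ) + 1)))).toAddMonoidHom with hfdef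
  set T := transvec i j hij f with hTdef
  have e1 : ee p n lam v i = (p : ZMod (p ^ lam ((i : ℕ) + 1))) ^ (v k) := by
    show (p : ZMod (p ^ lam ((i : ℕ) + 1))) ^ (v ((i : ℕ) + 1))
        = (p : ZMod (p ^ lam ((i : ℕ) + 1))) ^ (v k)
    rw [hi1]
  have e2 : f (ee p n lam v j) = (p : ZMod (p ^ lam ((i : ℕ) + 1))) ^ (v (k + 1)) := by
    have h0 : f (ee p n lam v j) = (ZMod.castHom hdvd (ZMod (p ^ lam ((i : ℕ) + 1))))
        ((p : ZMod (p ^ lam ((j : ℕ) + 1))) ^ (v ((j : ℕ) + 1))) := rfl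
    rw [h0, map_pow, map_natCast, hj1]
  have hTi : T (ee p n lam v) i
      = (p : ZMod (p ^ lam ((i : ℕ) + 1))) ^ (v k)
        + (p : ZMod (p ^ lam ((i : ℕ) + 1))) ^ (v (k + 1)) := by
    rw [hTdef, transvec_apply, Function.update_self, e1, e2]
  obtain ⟨u, hu⟩ := unit_cancel hp (m := lam ((i : ℕ) + 1)) hlt
  refine (R.trans ⟨T, rfl⟩) (R.trans (R_update_unit i u (T (ee p n lam v))) ?_)
  have hfinal : Function.update (T (ee p n lam v)) i
      (((u⁻¹ : (ZMod (p ^ lam ((i : ℕ) + 1)))ˣ) : ZMod (p ^ lam ((i : ℕ) + 1)))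
        * T (ee p n lam v) i)
      = ee p n lam (Function.update v k (v (k + 1))) := by
    funext z
    rcases eq_or_ne z i with hz | hz
    · subst hz
      rw [Function.update_self, hTi, ← hu, unit_mul_cancel]
      show (p : ZMod (p ^ lam ((i : ℕ) + 1))) ^ (v (k + 1))
          = (p : ZMod (p ^ lam ((i : ℕ) + 1))) ^ (Function.update v k (v (k + 1)) ((i : ℕ) + 1))
      rw [show (i : ℕ) + 1 = k from hi1, Function.update_self]
    · have hz1 : (z : ℕ) + 1 ≠ k := by
        intro h
        apply hz
        apply Fin.ext
        simp [hidef]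
        omega
      rw [Function.update_of_ne hz]
      show T (ee p n lam v) z
          = (p : ZMod (p ^ lam ((z : ℕ) + 1))) ^ (Function.update v k (v (k + 1)) ((z : ℕ) + 1))
      rw [hTdef, transvec_apply, Function.update_of_ne hz, Function.update_of_ne hz1]
      rfl
  rw [hfinal]
  exact R.refl _

lemma move_b (hp : p.Prime)
    (hmono : ∀ i j, 1 ≤ i → i ≤ j → j ≤ n → lam i ≤ lam j) (v : ℕ → ℕ) (k : ℕ)
    (hk1 : 1 ≤ k) (hkn : k < n) (hlt : v k + lam (k + 1) < v (k + 1) + lam k) :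
    R (ee p n lam v) (ee p n lam (Function.update v (k + 1) (v k + (lam (k + 1) - lam k)))) := by
  have hlk : lam k ≤ lam (k + 1) := hmono k (k + 1) hk1 (by omega) (by omega)
  set i : Fin n := ⟨k, hkn⟩ with hidef
  set j : Fin n := ⟨k - 1, by omega⟩ with hjdef
  have hi1 : (i : ℕ) + 1 = k + 1 := by simp [hidef]
  have hj1 : (j : ℕ) + 1 = k := by simp [hjdef]; omega
  have hij : j ≠ i := by
    intro h
    have := congrArg Fin.val h
    simp [hidef, hjdef] at this
    omega
  have hg0 : ((zmultiplesHom (ZMod (p ^ lam ((i : ℕ) + 1)))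
      ((p : ZMod (p ^ lam ((i : ℕ) + 1))) ^ (lam (k + 1) - lam k)))
      ((p ^ lam ((j : ℕ) + 1) : ℕ) : ℤ)) = 0 := by
    rw [zmultiplesHom_apply, hj1]
    have h1 : ((p ^ lam k : ℕ) : ℤ) • (p : ZMod (p ^ lam ((i : ℕ) + 1))) ^ (lam (k + 1) - lam k)
        = (p : ZMod (p ^ lam ((i : ℕ) + 1))) ^ (lam k + (lam (k + 1) - lam k)) := by
      rw [zsmul_eq_mul, pow_add]
      push_cast
      ring
    rw [h1, show lam k + (lam (k + 1) - lam k) = lam (k + 1) by omega, ← hi1]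
    rw [show ((p : ZMod (p ^ lam ((i : ℕ) + 1))) ^ lam ((i : ℕ) + 1))
        = ((p ^ lam ((i : ℕ) + 1) : ℕ) : ZMod (p ^ lam ((i : ℕ) + 1))) by push_cast; ring]
    exact ZMod.natCast_self _
  set f := ZMod.lift (p ^ lam ((j : ℕ) + 1))
    ⟨zmultiplesHom _ ((p : ZMod (p ^ lam ((i : ℕ) + 1))) ^ (lam (k + 1) - lam k)), hg0⟩
    with hfdef
  set T := transvec i j hij f with hTdef
  set w' := v k + (lam (k + 1) - lam k) with hw'def
  have hw'lt : w' < v (k + 1) := by omega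
  have e1 : ee p n lam v i = (p : ZMod (p ^ lam ((i : ℕ) + 1))) ^ (v (k + 1)) := by
    show (p : ZMod (p ^ lam ((i : ℕ) + 1))) ^ (v ((i : ℕ) + 1))
        = (p : ZMod (p ^ lam ((i : ℕ) + 1))) ^ (v (k + 1))
    rw [hi1]
  have e2 : f (ee p n lam v j) = (p : ZMod (p ^ lam ((i : ℕ) + 1))) ^ w' := by
    have hc : ee p n lam v j
        = (((p ^ (v ((j : ℕ) + 1)) : ℕ) : ℤ) : ZMod (p ^ lam ((j : ℕ) + 1))) := by
      show (p : ZMod (p ^ lam ((j : ℕ) + 1))) ^ (v ((j : ℕ) + 1)) = _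
      push_cast
      ring
    rw [hc, hfdef, ZMod.lift_coe, zmultiplesHom_apply, zsmul_eq_mul, hj1]
    push_cast
    rw [← pow_add, hw'def]
  have hTi : T (ee p n lam v) i
      = (p : ZMod (p ^ lam ((i : ℕ) + 1))) ^ (v (k + 1))
        + (p : ZMod (p ^ lam ((i : ℕ) + 1))) ^ w' := by
    rw [hTdef, transvec_apply, Function.update_self, e1, e2]
  obtain ⟨u, hu⟩ := unit_cancel hp (m := lam ((i : ℕ) + 1)) hw'lt
  refine (R.trans ⟨T, rfl⟩) (R.trans (R_update_unit i u (T (ee p n lam v))) ?_)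
  have hfinal : Function.update (T (ee p n lam v)) i
      (((u⁻¹ : (ZMod (p ^ lam ((i : ℕ) + 1)))ˣ) : ZMod (p ^ lam ((i : ℕ) + 1)))
        * T (ee p n lam v) i)
      = ee p n lam (Function.update v (k + 1) w') := by
    funext z
    rcases eq_or_ne z i with hz | hz
    · subst hz
      rw [Function.update_self, hTi, ← hu, unit_mul_cancel]
      show (p : ZMod (p ^ lam ((i : ℕ) + 1))) ^ w'
          = (p : ZMod (p ^ lam ((i : ℕ) + 1))) ^ (Function.update v (k + 1) w' ((i : ℕ) + 1))
      rw [show (i : ℕ) + 1 = k + 1 from hi1, Function.update_self]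
    · have hz1 : (z : ℕ) + 1 ≠ k + 1 := by
        intro h
        apply hz
        apply Fin.ext
        simp [hidef]
        omega
      rw [Function.update_of_ne hz]
      show T (ee p n lam v) z
          = (p : ZMod (p ^ lam ((z : ℕ) + 1))) ^ (Function.update v (k + 1) w' ((z : ℕ) + 1))
      rw [hTdef, transvec_apply, Function.update_of_ne hz, Function.update_of_ne hz1]
      rfl
  rw [hfinal]
  exact R.refl _


lemma regularize (hp : p.Prime) (hlam0 : lam 0 = 0)
    (hmono : ∀ i j, 1 ≤ i → i ≤ j → j ≤ n → lam i ≤ lam j) :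
    ∀ N (v : ℕ → ℕ), (∑ k ∈ Finset.range (n + 1), v k) ≤ N → v 0 = 0 →
      (∀ k, 1 ≤ k → k ≤ n → v k ≤ lam k) →
      ∃ c, Reg n lam c ∧ (∀ k, k ≤ n → c k ≤ lam k) ∧ R (ee p n lam v) (ee p n lam c) := by
  intro N
  induction N using Nat.strong_induction_on with
  | _ N ih =>
    intro v hsum hv0 hvb
    by_cases hbad : ∃ k, 1 ≤ k ∧ k < n ∧
        (v (k + 1) < v k ∨ v k + lam (k + 1) < v (k + 1) + lam k)
    · obtain ⟨k, hk1, hkn, hviol⟩ := hbad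
      rcases hviol with hviol | hviol
      · set v' := Function.update v k (v (k + 1)) with hv'
        have hsum' : (∑ m ∈ Finset.range (n + 1), v' m) < ∑ m ∈ Finset.range (n + 1), v m := by
          have hmem : k ∈ Finset.range (n + 1) := Finset.mem_range.2 (by omega)
          have hold : ∑ m ∈ Finset.range (n + 1), v m
              = (∑ m ∈ Finset.range (n + 1) \ {k}, v m) + v k :=
            Finset.sum_eq_sum_sdiff_singleton_add hmem v
          rw [hv', Finset.sum_update_of_mem hmem, hold]
          omega
        have hv'0 : v' 0 = 0 := by
          rw [hv', Function.update_of_ne (by omega : (0 : ℕ) ≠ k), hv0]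
        have hv'b : ∀ m, 1 ≤ m → m ≤ n → v' m ≤ lam m := by
          intro m hm1 hmn
          rcases eq_or_ne m k with rfl | hmk
          · rw [hv', Function.update_self]
            exact le_trans (by omega) (hvb m hm1 hmn)
          · rw [hv', Function.update_of_ne hmk]
            exact hvb m hm1 hmn
        obtain ⟨c, hc, hcl, hR⟩ := ih (∑ m ∈ Finset.range (n + 1), v' m)
          (by omega) v' le_rfl hv'0 hv'b
        exact ⟨c, hc, hcl, (move_a hp hmono v k hk1 hkn hviol).trans hR⟩
      · set v' := Function.update v (k + 1) (v k + (lam (k + 1) - lam k)) with hv'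
        have hlk : lam k ≤ lam (k + 1) := hmono k (k + 1) hk1 (by omega) (by omega)
        have hnew : v k + (lam (k + 1) - lam k) < v (k + 1) := by omega
        have hsum' : (∑ m ∈ Finset.range (n + 1), v' m) < ∑ m ∈ Finset.range (n + 1), v m := by
          have hmem : k + 1 ∈ Finset.range (n + 1) := Finset.mem_range.2 (by omega)
          have hold : ∑ m ∈ Finset.range (n + 1), v m
              = (∑ m ∈ Finset.range (n + 1) \ {k + 1}, v m) + v (k + 1) :=
            Finset.sum_eq_sum_sdiff_singleton_add hmem v
          rw [hv', Finset.sum_update_of_mem hmem, hold]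
          omega
        have hv'0 : v' 0 = 0 := by
          rw [hv', Function.update_of_ne (by omega : (0 : ℕ) ≠ k + 1), hv0]
        have hv'b : ∀ m, 1 ≤ m → m ≤ n → v' m ≤ lam m := by
          intro m hm1 hmn
          rcases eq_or_ne m (k + 1) with rfl | hmk
          · rw [hv', Function.update_self]
            have := hvb k hk1 (by omega)
            omega
          · rw [hv', Function.update_of_ne hmk]
            exact hvb m hm1 hmn
        obtain ⟨c, hc, hcl, hR⟩ := ih (∑ m ∈ Finset.range (n + 1), v' m)
          (by omega) v' le_rfl hv'0 hv'b
        exact ⟨c, hc, hcl, (move_b hp hmono v k hk1 hkn hviol).trans hR⟩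
    · push_neg at hbad
      refine ⟨v, ⟨hv0, ?_⟩, fun k hk => ?_, R.refl _⟩
      · intro k hk
        rcases Nat.eq_zero_or_pos k with rfl | hk1
        · have h01 : (0 : ℕ) + 1 = 1 := rfl
          rw [h01, hv0, hlam0]
          have := hvb 1 le_rfl (by omega)
          omega
        · have := hbad k (by omega) hk
          omega
      · rcases Nat.eq_zero_or_pos k with rfl | hk1
        · rw [hv0]; omega
        · exact hvb k (by omega) hk

lemma exists_reg (hp : p.Prime) (hlam0 : lam 0 = 0)
    (hmono : ∀ i j, 1 ≤ i → i ≤ j → j ≤ n → lam i ≤ lam j) (x : G p n lam) :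
    ∃ c, Reg n lam c ∧ (∀ k, k ≤ n → c k ≤ lam k) ∧ R x (ee p n lam c) := by
  obtain ⟨v, hv0, hvb, hR⟩ := move_diag hp x
  obtain ⟨c, hc, hcl, hR2⟩ := regularize hp hlam0 hmono (∑ k ∈ Finset.range (n + 1), v k) v
    le_rfl hv0 hvb
  exact ⟨c, hc, hcl, hR.trans hR2⟩

lemma exists_reg_inv (hp : p.Prime) (hlam0 : lam 0 = 0)
    (hmono : ∀ i j, 1 ≤ i → i ≤ j → j ≤ n → lam i ≤ lam j) (x : G p n lam) :
    ∃ c, Reg n lam c ∧ (∀ k, k ≤ n → c k ≤ lam k) ∧ R x (ee p n lam c) ∧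
      ∀ k, 1 ≤ k → k ≤ n → invc lam x k = c k := by
  obtain ⟨c, hc, hcl, hR⟩ := exists_reg hp hlam0 hmono x
  refine ⟨c, hc, hcl, hR, fun k hk1 hkn => ?_⟩
  obtain ⟨φ, hφ⟩ := hR
  calc invc lam x k = invc lam (φ x) k := (invc_aut φ x k).symm
    _ = invc lam (ee p n lam c) k := by rw [hφ]
    _ = c k := invc_ee hp hmono hc hcl k hk1 hkn


lemma invc_zero (hlam0 : lam 0 = 0) (x : G p n lam) : invc lam x 0 = 0 := by
  unfold invc
  rw [hlam0]
  simp

lemma exists_reg_inv' (hp : p.Prime) (hlam0 : lam 0 = 0)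
    (hmono : ∀ i j, 1 ≤ i → i ≤ j → j ≤ n → lam i ≤ lam j) (x : G p n lam) :
    ∃ c, Reg n lam c ∧ (∀ k, k ≤ n → c k ≤ lam k) ∧ R x (ee p n lam c) ∧
      ∀ k, k ≤ n → invc lam x k = c k := by
  obtain ⟨c, hc, hcl, hR, hinv⟩ := exists_reg_inv hp hlam0 hmono x
  refine ⟨c, hc, hcl, hR, fun k hkn => ?_⟩
  rcases Nat.eq_zero_or_pos k with rfl | hk1
  · rw [invc_zero hlam0, hc.1]
  · exact hinv k hk1 hkn

lemma invc_ee_all (hp : p.Prime) (hlam0 : lam 0 = 0)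
    (hmono : ∀ i j, 1 ≤ i → i ≤ j → j ≤ n → lam i ≤ lam j)
    {c : ℕ → ℕ} (hc : Reg n lam c) (hcl : ∀ k, k ≤ n → c k ≤ lam k) :
    ∀ k, k ≤ n → invc lam (ee p n lam c) k = c k := by
  intro k hkn
  rcases Nat.eq_zero_or_pos k with rfl | hk1
  · rw [invc_zero hlam0, hc.1]
  · exact invc_ee hp hmono hc hcl k hk1 hkn

variable (n lam) in
/-- Partial sums of a difference tuple. -/
noncomputable def cOf (d : ∀ i : Fin n, Fin (lam ((i : ℕ) + 1) - lam (i : ℕ) + 1)) : ℕ → ℕ :=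
  fun k => ∑ j ∈ Finset.range (min k n),
    if h : j < n then ((d ⟨j, h⟩ : ℕ)) else 0

lemma cOf_zero (d : ∀ i : Fin n, Fin (lam ((i : ℕ) + 1) - lam (i : ℕ) + 1)) :
    cOf n lam d 0 = 0 := by
  unfold cOf
  simp

lemma cOf_succ (d : ∀ i : Fin n, Fin (lam ((i : ℕ) + 1) - lam (i : ℕ) + 1))
    {k : ℕ} (hk : k < n) :
    cOf n lam d (k + 1) = cOf n lam d k + (d ⟨k, hk⟩ : ℕ) := by
  unfold cOf
  rw [show min (k + 1) n = k + 1 by omega, show min k n = k by omega,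
    Finset.sum_range_succ, dif_pos hk]

lemma cOf_reg (hlam0 : lam 0 = 0)
    (hmono : ∀ i j, 1 ≤ i → i ≤ j → j ≤ n → lam i ≤ lam j)
    (d : ∀ i : Fin n, Fin (lam ((i : ℕ) + 1) - lam (i : ℕ) + 1)) :
    Reg n lam (cOf n lam d) := by
  refine ⟨cOf_zero d, fun k hk => ?_⟩
  have hd : (d ⟨k, hk⟩ : ℕ) ≤ lam (k + 1) - lam k := by
    have := (d ⟨k, hk⟩).isLt
    simp only [Fin.val_mk] at this ⊢
    omega
  have hlk : lam k ≤ lam (k + 1) := by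
    rcases Nat.eq_zero_or_pos k with rfl | hk1
    · rw [hlam0]; omega
    · exact hmono k (k + 1) hk1 (by omega) (by omega)
  rw [cOf_succ d hk]
  omega

lemma card_orbits (hp : p.Prime) (hn : 1 ≤ n) (hlam0 : lam 0 = 0)
    (hmono : ∀ i j, 1 ≤ i → i ≤ j → j ≤ n → lam i ≤ lam j) :
    Nat.card (AddAction.orbitRel.Quotient (AddAut (G p n lam)) (G p n lam))
      = ∏ i ∈ Finset.range n, (lam (i + 1) - lam i + 1) := by
  classical
  set D := ∀ i : Fin n, Fin (lam ((i : ℕ) + 1) - lam (i : ℕ) + 1) with hD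
  have hFb : ∀ x : G p n lam, ∀ i : Fin n,
      invc lam x ((i : ℕ) + 1) - invc lam x (i : ℕ) < lam ((i : ℕ) + 1) - lam (i : ℕ) + 1 := by
    intro x i
    obtain ⟨c, hc, hcl, hR, hinv⟩ := exists_reg_inv' hp hlam0 hmono x
    rw [hinv ((i : ℕ) + 1) (by omega), hinv (i : ℕ) (by omega)]
    have h1 := (hc.2 (i : ℕ) i.isLt).1
    have h2 := (hc.2 (i : ℕ) i.isLt).2
    omega
  set F : G p n lam → D := fun x i => ⟨invc lam x ((i : ℕ) + 1) - invc lam x (i : ℕ), hFb x i⟩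
    with hFdef
  have hcompat : ∀ a b : G p n lam,
      (AddAction.orbitRel (AddAut (G p n lam)) (G p n lam)) a b → F a = F b := by
    intro a b hab
    rw [AddAction.orbitRel_apply, AddAction.mem_orbit_iff] at hab
    obtain ⟨φ, hφ⟩ := hab
    rw [AddAut.smul_def] at hφ
    funext i
    apply Fin.ext
    show invc lam a ((i : ℕ) + 1) - invc lam a (i : ℕ)
        = invc lam b ((i : ℕ) + 1) - invc lam b (i : ℕ)
    rw [← hφ, invc_aut, invc_aut]
  set g : AddAction.orbitRel.Quotient (AddAut (G p n lam)) (G p n lam) → D :=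
    Quotient.lift F hcompat with hg
  have hginj : Function.Injective g := by
    intro q1 q2
    refine Quotient.inductionOn₂ q1 q2 ?_
    intro x y h
    have hxy : F x = F y := h
    obtain ⟨cx, hcx, hcxl, hRx, hinvx⟩ := exists_reg_inv' hp hlam0 hmono x
    obtain ⟨cy, hcy, hcyl, hRy, hinvy⟩ := exists_reg_inv' hp hlam0 hmono y
    have hinveq : ∀ k, k ≤ n → invc lam x k = invc lam y k := by
      intro k hkn
      induction k with
      | zero => rw [invc_zero hlam0, invc_zero hlam0]
      | succ m ihm =>
        have hmn : m < n := by omega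
        have hFi := congrFun hxy ⟨m, hmn⟩
        have hFi' : invc lam x (m + 1) - invc lam x m = invc lam y (m + 1) - invc lam y m :=
          congrArg Fin.val hFi
        have hmx : invc lam x m ≤ invc lam x (m + 1) := by
          rw [hinvx m (by omega), hinvx (m + 1) (by omega)]
          exact (hcx.2 m hmn).1
        have hmy : invc lam y m ≤ invc lam y (m + 1) := by
          rw [hinvy m (by omega), hinvy (m + 1) (by omega)]
          exact (hcy.2 m hmn).1
        have := ihm (by omega)
        omega
    have hee : ee p n lam cx = ee p n lam cy := by
      funext i
      show (p : ZMod (p ^ lam ((i : ℕ) + 1))) ^ (cx ((i : ℕ) + 1))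
          = (p : ZMod (p ^ lam ((i : ℕ) + 1))) ^ (cy ((i : ℕ) + 1))
      rw [← hinvx ((i : ℕ) + 1) (by omega), ← hinvy ((i : ℕ) + 1) (by omega),
        hinveq ((i : ℕ) + 1) (by omega)]
    have hRxy : R y x := by
      apply R.trans hRy
      rw [← hee]
      exact hRx.symm
    apply Quotient.sound
    apply (AddAction.orbitRel_apply).2
    rw [AddAction.mem_orbit_iff]
    obtain ⟨φ, hφ⟩ := hRxy
    exact ⟨φ, hφ⟩
  have hgsurj : Function.Surjective g := by
    intro d
    refine ⟨Quotient.mk _ (ee p n lam (cOf n lam d)), ?_⟩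
    have h1 : g (Quotient.mk _ (ee p n lam (cOf n lam d))) = F (ee p n lam (cOf n lam d)) :=
      rfl
    rw [h1]
    funext i
    apply Fin.ext
    show invc lam (ee p n lam (cOf n lam d)) ((i : ℕ) + 1)
        - invc lam (ee p n lam (cOf n lam d)) (i : ℕ) = (d i : ℕ)
    have hreg := cOf_reg hlam0 hmono d
    have hbnd := hreg.le_lam hlam0
    rw [invc_ee_all hp hlam0 hmono hreg hbnd ((i : ℕ) + 1) (by omega),
      invc_ee_all hp hlam0 hmono hreg hbnd (i : ℕ) (by omega)]
    have hs := cOf_succ d i.isLt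
    have : (⟨(i : ℕ), i.isLt⟩ : Fin n) = i := Fin.ext rfl
    rw [this] at hs
    omega
  have hcard : Nat.card (AddAction.orbitRel.Quotient (AddAut (G p n lam)) (G p n lam))
      = Nat.card D := Nat.card_eq_of_bijective g ⟨hginj, hgsurj⟩
  rw [hcard, hD, Nat.card_pi]
  have h2 : ∀ i : Fin n, Nat.card (Fin (lam ((i : ℕ) + 1) - lam (i : ℕ) + 1))
      = lam ((i : ℕ) + 1) - lam (i : ℕ) + 1 := fun i => by
    rw [Nat.card_eq_fintype_card, Fintype.card_fin]
  rw [Finset.prod_congr rfl (fun i _ => h2 i)]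
  exact Fin.prod_univ_eq_prod_range (fun k => lam (k + 1) - lam k + 1) n


variable (p n lam) in
/-- The box subgroup `∏ p^{c_i} Z_{p^{λ_i}}`. -/
def Hsub (c : ℕ → ℕ) : AddSubgroup (G p n lam) :=
  AddSubgroup.pi Set.univ fun i => mulSub p (p ^ lam ((i : ℕ) + 1)) (c ((i : ℕ) + 1))

lemma mem_Hsub {c : ℕ → ℕ} {x : G p n lam} :
    x ∈ Hsub p n lam c ↔
      ∀ i : Fin n, x i ∈ mulSub p (p ^ lam ((i : ℕ) + 1)) (c ((i : ℕ) + 1)) := by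
  rw [Hsub, AddSubgroup.mem_pi]
  simp

lemma ee_mem_Hsub (c : ℕ → ℕ) : ee p n lam c ∈ Hsub p n lam c :=
  mem_Hsub.2 fun _ => ⟨1, (mul_one _).symm⟩

lemma single_mem_Hsub (c : ℕ → ℕ) (i : Fin n) :
    Pi.single i ((p : ZMod (p ^ lam ((i : ℕ) + 1))) ^ (c ((i : ℕ) + 1))) ∈ Hsub p n lam c := by
  rw [mem_Hsub]
  intro j
  rcases eq_or_ne j i with rfl | hj
  · rw [Pi.single_eq_same]
    exact ⟨1, (mul_one _).symm⟩
  · rw [Pi.single_eq_of_ne hj]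
    exact zero_mem _

lemma Hsub_map_le (hp : p.Prime)
    (hmono : ∀ i j, 1 ≤ i → i ≤ j → j ≤ n → lam i ≤ lam j)
    {c : ℕ → ℕ} (hc : Reg n lam c)
    (f : G p n lam →+ G p n lam) {x : G p n lam} (hx : x ∈ Hsub p n lam c) :
    f x ∈ Hsub p n lam c := by
  classical
  rw [← Finset.univ_sum_single x, map_sum]
  refine sum_mem fun j _ => mem_Hsub.2 fun i => ?_
  have hterm : (f (Pi.single j (x j))) i
      = ((Pi.evalAddMonoidHom _ i).comp (f.comp (AddMonoidHom.single _ j))) (x j) := rfl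
  rw [hterm]
  have hxj := mem_Hsub.1 hx j
  have himg := addHom_image_mem hp
    ((Pi.evalAddMonoidHom _ i).comp (f.comp (AddMonoidHom.single _ j))) hxj
  refine mulSub_anti ?_ himg
  rcases le_total ((i : ℕ) + 1) ((j : ℕ) + 1) with hij | hij
  · have := hc.mono ((i : ℕ) + 1) ((j : ℕ) + 1) hij (by omega)
    omega
  · have h1 := hc.lmono ((j : ℕ) + 1) ((i : ℕ) + 1) hij (by omega)
    have h2 : lam ((j : ℕ) + 1) ≤ lam ((i : ℕ) + 1) := hmono _ _ (by omega) hij (by omega)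
    omega

lemma Hsub_char (hp : p.Prime)
    (hmono : ∀ i j, 1 ≤ i → i ≤ j → j ≤ n → lam i ≤ lam j)
    {c : ℕ → ℕ} (hc : Reg n lam c) (φ : AddAut (G p n lam)) :
    (Hsub p n lam c).map φ.toAddMonoidHom = Hsub p n lam c := by
  apply le_antisymm
  · rintro _ ⟨y, hy, rfl⟩
    exact Hsub_map_le hp hmono hc φ.toAddMonoidHom hy
  · intro y hy
    exact ⟨(-φ) y, Hsub_map_le hp hmono hc (-φ : AddAut (G p n lam)).toAddMonoidHom hy,
      φ.apply_symm_apply y⟩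

lemma Hsub_le_closure (hp : p.Prime) (c : ℕ → ℕ) :
    Hsub p n lam c ≤ AddSubgroup.closure
      (Set.range fun i : Fin n =>
        Pi.single i ((p : ZMod (p ^ lam ((i : ℕ) + 1))) ^ (c ((i : ℕ) + 1)))) := by
  classical
  intro x hx
  rw [← Finset.univ_sum_single x]
  refine sum_mem fun j _ => ?_
  obtain ⟨y, hy⟩ := mem_Hsub.1 hx j
  haveI : NeZero (p ^ lam ((j : ℕ) + 1)) := ⟨pow_ne_zero _ hp.pos.ne'⟩
  have h1 : x j = (y.val : ℕ) • ((p : ZMod (p ^ lam ((j : ℕ) + 1))) ^ (c ((j : ℕ) + 1))) := by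
    rw [hy, nsmul_eq_mul, ZMod.natCast_zmod_val]
    ring
  have h2 : (Pi.single j (x j) : G p n lam)
      = (y.val : ℕ) • (Pi.single j ((p : ZMod (p ^ lam ((j : ℕ) + 1))) ^ (c ((j : ℕ) + 1)))
          : G p n lam) := by
    rw [h1]
    exact (AddMonoidHom.single (fun i : Fin n => ZMod (p ^ lam ((i : ℕ) + 1))) j).map_nsmul
      y.val ((p : ZMod (p ^ lam ((j : ℕ) + 1))) ^ (c ((j : ℕ) + 1)))
  rw [h2]
  exact nsmul_mem (AddSubgroup.subset_closure (Set.mem_range_self j)) _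

lemma closure_orbit_eq (hp : p.Prime) (hp2 : p ≠ 2)
    (hmono : ∀ i j, 1 ≤ i → i ≤ j → j ≤ n → lam i ≤ lam j)
    {c : ℕ → ℕ} (hc : Reg n lam c) :
    AddSubgroup.closure (AddAction.orbit (AddAut (G p n lam)) (ee p n lam c) : Set (G p n lam))
      = Hsub p n lam c := by
  apply le_antisymm
  · rw [AddSubgroup.closure_le]
    rintro z hz
    rw [AddAction.mem_orbit_iff] at hz
    obtain ⟨φ, rfl⟩ := hz
    rw [AddAut.smul_def]
    exact Hsub_map_le hp hmono hc φ.toAddMonoidHom (ee_mem_Hsub c)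
  · refine le_trans (Hsub_le_closure hp c) ((AddSubgroup.closure_le _).2 ?_)
    rintro z ⟨i, rfl⟩
    have hodd : Odd (p ^ lam ((i : ℕ) + 1)) := (hp.odd_of_ne_two hp2).pow
    have hcop : Nat.Coprime 2 (p ^ lam ((i : ℕ) + 1)) := Nat.coprime_two_left.2 hodd
    set u2 := ZMod.unitOfCoprime 2 hcop with hu2
    set φ2 := diagAut (n := n) (lam := lam) (p := p) (Function.update (fun j => 1) i u2)
      with hφ2
    have hclaim : φ2 (ee p n lam c) - ee p n lam c
        = Pi.single i ((p : ZMod (p ^ lam ((i : ℕ) + 1))) ^ (c ((i : ℕ) + 1))) := by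
      funext z
      rcases eq_or_ne z i with hz | hz
      · subst hz
        show φ2 (ee p n lam c) z - ee p n lam c z = _
        rw [hφ2, diagAut_apply, Function.update_self, Pi.single_eq_same, hu2,
          ZMod.coe_unitOfCoprime]
        show ((2 : ℕ) : ZMod (p ^ lam ((z : ℕ) + 1))) * (p : ZMod (p ^ lam ((z : ℕ) + 1)))
            ^ (c ((z : ℕ) + 1)) - (p : ZMod (p ^ lam ((z : ℕ) + 1))) ^ (c ((z : ℕ) + 1)) = _
        push_cast
        ring
      · show φ2 (ee p n lam c) z - ee p n lam c z = _
        rw [hφ2, diagAut_apply, Function.update_of_ne hz, Pi.single_eq_of_ne hz, Units.val_one,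
          one_mul, sub_self]
    beta_reduce
    rw [SetLike.mem_coe, ← hclaim]
    refine sub_mem (AddSubgroup.subset_closure ?_) (AddSubgroup.subset_closure ?_)
    · exact AddAction.mem_orbit _ φ2
    · exact AddAction.mem_orbit_self _

lemma char_eq_Hsub (hp : p.Prime) (hp2 : p ≠ 2) (hlam0 : lam 0 = 0)
    (hmono : ∀ i j, 1 ≤ i → i ≤ j → j ≤ n → lam i ≤ lam j)
    (H : AddSubgroup (G p n lam))
    (hH : ∀ φ : AddAut (G p n lam), H.map φ.toAddMonoidHom = H) :
    ∃ c, Reg n lam c ∧ (∀ k, k ≤ n → c k ≤ lam k) ∧ H = Hsub p n lam c := by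
  classical
  have horb : ∀ x ∈ H, ∀ φ : AddAut (G p n lam), φ x ∈ H := by
    intro x hx φ
    rw [← hH φ]
    exact ⟨x, hx, rfl⟩
  have hxsub : ∀ x ∈ H, ∀ c, Reg n lam c → R x (ee p n lam c) →
      (Hsub p n lam c ≤ H ∧ x ∈ Hsub p n lam c) := by
    intro x hx c hc hR
    obtain ⟨ψ, hψ⟩ := hR
    constructor
    · rw [← closure_orbit_eq hp hp2 hmono hc, AddSubgroup.closure_le]
      rintro z hz
      rw [AddAction.mem_orbit_iff] at hz
      obtain ⟨φ, rfl⟩ := hz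
      rw [AddAut.smul_def, ← hψ]
      exact horb x hx (φ + ψ)
    · have hx' : x = (-ψ) (ee p n lam c) := by rw [← hψ]; exact (ψ.symm_apply_apply x).symm
      rw [hx']
      exact Hsub_map_le hp hmono hc (-ψ : AddAut (G p n lam)).toAddMonoidHom (ee_mem_Hsub c)
  set cmin : ℕ → ℕ := fun k => sInf ((fun z => invc lam z k) '' (H : Set (G p n lam)))
    with hcmin
  have hminmem : ∀ k, ∃ x ∈ H, invc lam x k = cmin k := by
    intro k
    have hne : ((fun z => invc lam z k) '' (H : Set (G p n lam))).Nonempty :=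
      ⟨invc lam 0 k, 0, H.zero_mem, rfl⟩
    obtain ⟨x, hx, hxe⟩ := Nat.sInf_mem hne
    exact ⟨x, hx, hxe⟩
  have hminle : ∀ k, ∀ x ∈ H, cmin k ≤ invc lam x k := fun k x hx =>
    Nat.sInf_le ⟨x, hx, rfl⟩
  have hreg : Reg n lam cmin := by
    constructor
    · have h1 := hminle 0 0 H.zero_mem
      rw [invc_zero hlam0] at h1
      omega
    · intro k hk
      obtain ⟨x', hx', he'⟩ := hminmem (k + 1)
      obtain ⟨x'', hx'', he''⟩ := hminmem k
      obtain ⟨c', hc', hcl', hR', hinv'⟩ := exists_reg_inv' hp hlam0 hmono x'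
      obtain ⟨c'', hc'', hcl'', hR'', hinv''⟩ := exists_reg_inv' hp hlam0 hmono x''
      constructor
      · have h1 := hminle k x' hx'
        have h2 : invc lam x' k ≤ invc lam x' (k + 1) := by
          rw [hinv' k (by omega), hinv' (k + 1) (by omega)]
          exact (hc'.2 k hk).1
        omega
      · have h1 := hminle (k + 1) x'' hx''
        have h2 : invc lam x'' (k + 1) + lam k ≤ invc lam x'' k + lam (k + 1) := by
          rw [hinv'' k (by omega), hinv'' (k + 1) (by omega)]
          exact (hc''.2 k hk).2
        omega
  have hbnd : ∀ k, k ≤ n → cmin k ≤ lam k := hreg.le_lam hlam0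
  refine ⟨cmin, hreg, hbnd, le_antisymm ?_ ?_⟩
  · intro x hx
    obtain ⟨c, hc, hcl, hR, hinv⟩ := exists_reg_inv' hp hlam0 hmono x
    have hxm : x ∈ Hsub p n lam c := (hxsub x hx c hc hR).2
    rw [mem_Hsub] at hxm ⊢
    intro i
    refine mulSub_anti ?_ (hxm i)
    rw [← hinv ((i : ℕ) + 1) (by omega)]
    exact hminle ((i : ℕ) + 1) x hx
  · refine le_trans (Hsub_le_closure hp cmin) ((AddSubgroup.closure_le _).2 ?_)
    rintro z ⟨i, rfl⟩
    obtain ⟨x, hx, he⟩ := hminmem ((i : ℕ) + 1)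
    obtain ⟨c, hc, hcl, hR, hinv⟩ := exists_reg_inv' hp hlam0 hmono x
    have hce : c ((i : ℕ) + 1) = cmin ((i : ℕ) + 1) := by
      rw [← hinv ((i : ℕ) + 1) (by omega), he]
    beta_reduce
    rw [SetLike.mem_coe, ← hce]
    exact (hxsub x hx c hc hR).1 (single_mem_Hsub c i)


lemma card_char (hp : p.Prime) (hp2 : p ≠ 2) (hlam0 : lam 0 = 0)
    (hmono : ∀ i j, 1 ≤ i → i ≤ j → j ≤ n → lam i ≤ lam j) :
    Nat.card {H : AddSubgroup (G p n lam) //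
        ∀ φ : AddAut (G p n lam), H.map φ.toAddMonoidHom = H}
      = ∏ i ∈ Finset.range n, (lam (i + 1) - lam i + 1) := by
  classical
  set D := ∀ i : Fin n, Fin (lam ((i : ℕ) + 1) - lam (i : ℕ) + 1) with hD
  set T : D → {H : AddSubgroup (G p n lam) //
      ∀ φ : AddAut (G p n lam), H.map φ.toAddMonoidHom = H} :=
    fun d => ⟨Hsub p n lam (cOf n lam d),
      fun φ => Hsub_char hp hmono (cOf_reg hlam0 hmono d) φ⟩ with hT
  have hTinj : Function.Injective T := by
    intro d d' hdd
    have heq : Hsub p n lam (cOf n lam d) = Hsub p n lam (cOf n lam d') :=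
      congrArg Subtype.val hdd
    have hle : ∀ (e e' : D), Hsub p n lam (cOf n lam e) ≤ Hsub p n lam (cOf n lam e') →
        ∀ i : Fin n, cOf n lam e' ((i : ℕ) + 1) ≤ cOf n lam e ((i : ℕ) + 1) := by
      intro e e' hsub i
      have hmem := hsub (single_mem_Hsub (cOf n lam e) i)
      have hcomp := mem_Hsub.1 hmem i
      rw [Pi.single_eq_same] at hcomp
      have := (pow_mem_mulSub_iff hp).1 hcomp
      have hbe := (cOf_reg hlam0 hmono e).le_lam hlam0 ((i : ℕ) + 1) (by omega)
      have hbe' := (cOf_reg hlam0 hmono e').le_lam hlam0 ((i : ℕ) + 1) (by omega)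
      omega
    have h1 := hle d d' (le_of_eq heq)
    have h2 := hle d' d (ge_of_eq heq)
    have hck : ∀ i : Fin n, cOf n lam d ((i : ℕ) + 1) = cOf n lam d' ((i : ℕ) + 1) :=
      fun i => le_antisymm (h2 i) (h1 i)
    funext i
    apply Fin.ext
    have hs := cOf_succ d (i.isLt)
    have hs' := cOf_succ d' (i.isLt)
    have hall : ∀ k, k ≤ n → cOf n lam d k = cOf n lam d' k := by
      intro k hk
      induction k with
      | zero => rw [cOf_zero, cOf_zero]
      | succ m ihm =>
        have hmn : m < n := by omega
        have := hck ⟨m, hmn⟩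
        simpa using this
    have e1 := hall (i : ℕ) (by omega)
    have hieq : (⟨(i : ℕ), i.isLt⟩ : Fin n) = i := Fin.ext rfl
    rw [hieq] at hs hs'
    have e2 := hck i
    omega
  have hTsurj : Function.Surjective T := by
    rintro ⟨H, hH⟩
    obtain ⟨c, hc, hcl, hHe⟩ := char_eq_Hsub hp hp2 hlam0 hmono H hH
    have hb : ∀ i : Fin n, c ((i : ℕ) + 1) - c (i : ℕ) < lam ((i : ℕ) + 1) - lam (i : ℕ) + 1 := by
      intro i
      have h1 := (hc.2 (i : ℕ) i.isLt).1
      have h2 := (hc.2 (i : ℕ) i.isLt).2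
      omega
    set d : D := fun i => ⟨c ((i : ℕ) + 1) - c (i : ℕ), hb i⟩ with hd
    refine ⟨d, ?_⟩
    have hcd : ∀ k, k ≤ n → cOf n lam d k = c k := by
      intro k hk
      induction k with
      | zero => rw [cOf_zero, hc.1]
      | succ m ihm =>
        have hmn : m < n := by omega
        rw [cOf_succ d hmn, ihm (by omega)]
        have hmono' := (hc.2 m hmn).1
        show c m + (c (m + 1) - c m) = c (m + 1)
        omega
    have : Hsub p n lam (cOf n lam d) = Hsub p n lam c := by
      unfold Hsub
      congr 1
      funext i
      rw [hcd ((i : ℕ) + 1) (by omega)]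
    apply Subtype.ext
    show Hsub p n lam (cOf n lam d) = H
    rw [this, hHe]
  have hcard := Nat.card_eq_of_bijective T ⟨hTinj, hTsurj⟩
  rw [← hcard, hD, Nat.card_pi]
  have h2 : ∀ i : Fin n, Nat.card (Fin (lam ((i : ℕ) + 1) - lam (i : ℕ) + 1))
      = lam ((i : ℕ) + 1) - lam (i : ℕ) + 1 := fun i => by
    rw [Nat.card_eq_fintype_card, Fintype.card_fin]
  rw [Finset.prod_congr rfl (fun i _ => h2 i)]
  exact Fin.prod_univ_eq_prod_range (fun k => lam (k + 1) - lam k + 1) n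

end Main2
end MBB

/-- Miller–Baer–Birkhoff: for `G = Z_{p^{λ_1}} × ⋯ × Z_{p^{λ_n}}` (with the convention
`λ_0 = 0`), the number of orbits of `Aut(G)` acting on `G` equals
`∏_{i=1}^{n} (λ_i − λ_{i−1} + 1)`; and if `p ≠ 2` this is also the number of
characteristic subgroups of `G`. -/
theorem card_automorphism_classes (p : ℕ) (hp : p.Prime) [NeZero p]
    (n : ℕ) (hn : 1 ≤ n) (lam : ℕ → ℕ) (hlam0 : lam 0 = 0)
    (hlam1 : ∀ i, 1 ≤ i → i ≤ n → 1 ≤ lam i)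
    (hmono : ∀ i j, 1 ≤ i → i ≤ j → j ≤ n → lam i ≤ lam j) :
    Nat.card (AddAction.orbitRel.Quotient
        (AddAut (∀ i : Fin n, ZMod (p ^ lam ((i : ℕ) + 1))))
        (∀ i : Fin n, ZMod (p ^ lam ((i : ℕ) + 1)))) =
      ∏ i ∈ Finset.range n, (lam (i + 1) - lam i + 1) ∧
    (p ≠ 2 →
      Nat.card {H : AddSubgroup (∀ i : Fin n, ZMod (p ^ lam ((i : ℕ) + 1))) //
          ∀ φ : AddAut (∀ i : Fin n, ZMod (p ^ lam ((i : ℕ) + 1))),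
            H.map φ.toAddMonoidHom = H} =
        ∏ i ∈ Finset.range n, (lam (i + 1) - lam i + 1)) := by
  constructor
  · exact MBB.card_orbits hp hn hlam0 hmono
  · intro hp2
    exact MBB.card_char hp hp2 hlam0 hmono
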